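/- arXiv:2501.18932 — 6 statements merged into one kernel-verified Lean document; each statement's English description precedes it below -/
import Mathlib

section
/- Let n be a positive integer and let a with 1 ≤ a < n be a nonzero zero-divisor of Z_n, and set d = gcd(a,n). If a² ≠ 0 in Z_n, then the degree of the vertex a in the zero-divisor graph Γ(Z_n) equals d − 1. -/
/-- `x` is a vertex of the zero-divisor graph of `ZMod n`:
a nonzero zero-divisor. -/
def ZDVertex (n : ℕ) (x : ZMod n) : Prop :=
  x ≠ 0 ∧ ∃ y : ZMod n, y ≠ 0 ∧ x * y = 0

/-- The zero-divisor graph `Γ(ZMod n)`: vertices are the nonzero zero-divisors,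
two distinct vertices are adjacent iff their product is zero. -/
def zdGraph (n : ℕ) : SimpleGraph {x : ZMod n // ZDVertex n x} where
  Adj a b := a ≠ b ∧ (a : ZMod n) * (b : ZMod n) = 0
  symm := by
    constructor
    intro a b h
    exact ⟨h.1.symm, by rw [mul_comm]; exact h.2⟩
  loopless := by
    constructor
    intro a h
    exact h.1 rfl

theorem stmt4 (n : ℕ) (hn : 0 < n)
    (a : {x : ZMod n // ZDVertex n x})
    (h2 : (a : ZMod n) * (a : ZMod n) ≠ 0) :
    ((zdGraph n).neighborSet a).ncard = Nat.gcd (a : ZMod n).val n - 1 := by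
  classical
  haveI : NeZero n := ⟨hn.ne'⟩
  set d := Nat.gcd (a : ZMod n).val n with hd_def
  have hdpos : 0 < d := Nat.gcd_pos_of_pos_right _ hn
  set m := n / d with hm_def
  have hdn : d ∣ n := Nat.gcd_dvd_right _ _
  have hmd : m * d = n := Nat.div_mul_cancel hdn
  have hmpos : 0 < m := Nat.div_pos (Nat.le_of_dvd hn hdn) hdpos
  -- Key characterization: a * b = 0 ↔ m ∣ b.val
  have key : ∀ b : ZMod n, (a : ZMod n) * b = 0 ↔ m ∣ b.val := by
    intro b
    have h1 : (a : ZMod n) * b = (((a : ZMod n).val * b.val : ℕ) : ZMod n) := by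
      push_cast [ZMod.natCast_val, ZMod.cast_id]
      rfl
    rw [h1, ZMod.natCast_eq_zero_iff]
    set A := (a : ZMod n).val
    have hA : d * (A / d) = A := Nat.mul_div_cancel' (Nat.gcd_dvd_left _ _)
    have hcop : Nat.Coprime (A / d) m := Nat.coprime_div_gcd_div_gcd hdpos
    constructor
    · intro h
      have h' : d * m ∣ d * ((A / d) * b.val) := by
        rw [← mul_assoc, hA, mul_comm d m, hmd]; exact h
      have h'' : m ∣ (A / d) * b.val := (Nat.mul_dvd_mul_iff_left hdpos).mp h'
      exact (Nat.Coprime.dvd_of_dvd_mul_left hcop.symm h'')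
    · intro h
      have : d * m ∣ d * ((A / d) * b.val) :=
        Nat.mul_dvd_mul_left d (Dvd.dvd.mul_left h _)
      rw [← mul_assoc, hA] at this
      rwa [mul_comm d m, hmd] at this
  -- The image of the neighbor set under val
  set T : Set (ZMod n) := {b : ZMod n | b ≠ 0 ∧ (a : ZMod n) * b = 0} with hT_def
  have himg : Subtype.val '' ((zdGraph n).neighborSet a) = T := by
    ext b
    constructor
    · rintro ⟨⟨b', hb'⟩, hadj, rfl⟩
      exact ⟨hb'.1, hadj.2⟩
    · rintro ⟨hb0, hab⟩
      have hbv : ZDVertex n b := ⟨hb0, ⟨(a : ZMod n), a.2.1, by rwa [mul_comm]⟩⟩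
      refine ⟨⟨b, hbv⟩, ⟨?_, hab⟩, rfl⟩
      intro hEq
      apply h2
      have hh : (a : ZMod n) = b := congrArg Subtype.val hEq
      rw [← hh] at hab
      exact hab
  -- T is the image of the finset S under Nat.cast
  set S : Finset ℕ := (Finset.Ioc 0 (n - 1)).filter (m ∣ ·) with hS_def
  have hTS : T = (fun j : ℕ => (j : ZMod n)) '' (S : Set ℕ) := by
    ext b
    constructor
    · rintro ⟨hb0, hab⟩
      refine ⟨b.val, ?_, ?_⟩
      · simp only [hS_def, Finset.coe_filter, Finset.mem_Ioc, Set.mem_setOf_eq,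
          Finset.mem_coe]
        refine ⟨⟨?_, ?_⟩, (key b).mp hab⟩
        · exact Nat.pos_of_ne_zero (fun h => hb0 ((ZMod.val_eq_zero b).mp h))
        · have := ZMod.val_lt b; omega
      · show ((b.val : ℕ) : ZMod n) = b
        exact (ZMod.natCast_val b).trans (ZMod.cast_id n b)
    · rintro ⟨j, hj, rfl⟩
      simp only [hS_def, Finset.coe_filter, Finset.mem_Ioc, Set.mem_setOf_eq,
        Finset.mem_coe] at hj
      obtain ⟨⟨hj0, hjn⟩, hjm⟩ := hj
      have hjlt : j < n := by omega
      have hval : ((j : ZMod n)).val = j := ZMod.val_cast_of_lt hjlt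
      constructor
      · intro h
        have h' : (j : ZMod n) = 0 := h
        rw [h', ZMod.val_zero] at hval
        omega
      · exact (key _).mpr (by rw [hval]; exact hjm)
  -- Now count
  have hinj : Set.InjOn (fun j : ℕ => (j : ZMod n)) (S : Set ℕ) := by
    intro x hx y hy hxy
    simp only [hS_def, Finset.coe_filter, Finset.mem_Ioc, Set.mem_setOf_eq,
      Finset.mem_coe] at hx hy
    have hx' : x < n := by omega
    have hy' : y < n := by omega
    have := congrArg ZMod.val hxy
    rwa [ZMod.val_cast_of_lt hx', ZMod.val_cast_of_lt hy'] at this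
  have hncard : ((zdGraph n).neighborSet a).ncard = T.ncard := by
    rw [← himg, Set.ncard_image_of_injective _ Subtype.val_injective]
  rw [hncard, hTS, Set.ncard_image_of_injOn hinj, Set.ncard_coe_finset]
  -- S.card = (n-1)/m = d - 1
  have hcard : S.card = (n - 1) / m := Nat.Ioc_filter_dvd_card_eq_div (n - 1) m
  rw [hcard]
  have : (n - 1) / m = d - 1 := by
    apply Nat.div_eq_of_lt_le
    · calc (d - 1) * m = d * m - m := by rw [Nat.sub_mul, one_mul]
      _ ≤ n - 1 := by rw [mul_comm d m, hmd]; omega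
    · have : d - 1 + 1 = d := Nat.succ_pred_eq_of_pos hdpos
      rw [this, mul_comm d m, hmd]; omega
  exact this
end

section
/- Let p be a prime and k > 1 a positive integer. Then the set of central vertices of the zero-divisor graph Γ(Z_{p^k}) is exactly { p^{k−1}, 2p^{k−1}, …, (p−1)p^{k−1} }, i.e., the set of nonzero multiples of p^{k−1} in Z_{p^k}. -/
/-- The eccentricity of a vertex: the supremum of distances to all vertices. -/
noncomputable def eccent {V : Type*} (G : SimpleGraph V) (u : V) : ℕ∞ :=
  ⨆ v, G.edist u v

/-- A central vertex: one of minimum eccentricity. -/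
def IsCentral {V : Type*} (G : SimpleGraph V) (u : V) : Prop :=
  ∀ v, eccent G u ≤ eccent G v

theorem stmt6 (p k : ℕ) (hp : p.Prime) (hk : 1 < k)
    (a : {x : ZMod (p ^ k) // ZDVertex (p ^ k) x}) :
    IsCentral (zdGraph (p ^ k)) a ↔
      ∃ i : ℕ, 1 ≤ i ∧ i ≤ p - 1 ∧
        (a : ZMod (p ^ k)) = ((i * p ^ (k - 1) : ℕ) : ZMod (p ^ k)) := by
  have hp1 : 1 < p := hp.one_lt
  haveI : NeZero (p ^ k) := ⟨pow_ne_zero k hp.pos.ne'⟩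
  -- basic cast facts
  have hcast : ∀ x : ZMod (p ^ k), x = 0 ↔ p ^ k ∣ x.val := by
    intro x
    constructor
    · rintro rfl; simp [ZMod.val_zero]
    · intro h
      rw [← ZMod.natCast_zmod_val x, ZMod.natCast_eq_zero_iff]
      exact h
  have hmulcast : ∀ x y : ZMod (p ^ k), x * y = ((x.val * y.val : ℕ) : ZMod (p ^ k)) := by
    intro x y
    rw [Nat.cast_mul, ZMod.natCast_zmod_val, ZMod.natCast_zmod_val]
  -- every vertex is divisible by p
  have hvp : ∀ x : ZMod (p ^ k), ZDVertex (p ^ k) x → p ∣ x.val := by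
    rintro x ⟨hx0, y, hy0, hxy⟩
    by_contra hnd
    have hcop : (x.val).Coprime (p ^ k) :=
      ((hp.coprime_iff_not_dvd.mpr hnd).symm).pow_right k
    have hu : IsUnit x := by
      rw [← ZMod.natCast_zmod_val x]
      exact (ZMod.isUnit_iff_coprime x.val (p ^ k)).mpr hcop
    exact hy0 ((hu.mul_right_eq_zero).mp hxy)
  -- a vertex with p^(k-1) ∣ val kills every vertex
  have hkill : ∀ x y : ZMod (p ^ k), p ^ (k - 1) ∣ x.val → ZDVertex (p ^ k) y →
      x * y = 0 := by
    intro x y hx hy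
    rw [hmulcast, ZMod.natCast_eq_zero_iff]
    have heq : p ^ k = p ^ (k - 1) * p := by
      rw [← pow_succ]; congr 1; omega
    exact (dvd_of_eq heq).trans (mul_dvd_mul hx (hvp y hy))
  -- p^(k-1) as an element
  have hpk1lt : p ^ (k - 1) < p ^ k := Nat.pow_lt_pow_right hp1 (by omega)
  have hpk1ne : ((p ^ (k - 1) : ℕ) : ZMod (p ^ k)) ≠ 0 := by
    rw [Ne, ZMod.natCast_eq_zero_iff]
    intro h
    exact absurd (Nat.le_of_dvd (pow_pos hp.pos _) h) (not_le.mpr hpk1lt)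
  have hpk1val : ((p ^ (k - 1) : ℕ) : ZMod (p ^ k)).val = p ^ (k - 1) :=
    ZMod.val_cast_of_lt hpk1lt
  have hplt : p < p ^ k := by
    calc p = p ^ 1 := (pow_one p).symm
    _ < p ^ k := Nat.pow_lt_pow_right hp1 (by omega)
  have hpval : (((p : ℕ) : ZMod (p ^ k))).val = p := ZMod.val_cast_of_lt hplt
  have hpne : ((p : ℕ) : ZMod (p ^ k)) ≠ 0 := by
    rw [Ne, ZMod.natCast_eq_zero_iff]
    intro h
    have := Nat.le_of_dvd hp.pos h
    omega
  have hmul0 : ((p ^ (k - 1) : ℕ) : ZMod (p ^ k)) * ((p : ℕ) : ZMod (p ^ k)) = 0 := by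
    rw [← Nat.cast_mul, ZMod.natCast_eq_zero_iff, ← pow_succ]
    exact pow_dvd_pow p (by omega)
  have hpk1vert : ZDVertex (p ^ k) ((p ^ (k - 1) : ℕ) : ZMod (p ^ k)) :=
    ⟨hpk1ne, ((p : ℕ) : ZMod (p ^ k)), hpne, hmul0⟩
  have hpvert : ZDVertex (p ^ k) ((p : ℕ) : ZMod (p ^ k)) :=
    ⟨hpne, ((p ^ (k - 1) : ℕ) : ZMod (p ^ k)), hpk1ne, by rw [mul_comm]; exact hmul0⟩
  -- eccentricity ≤ 1 for multiples of p^(k-1)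
  have hecc1 : ∀ x : {x : ZMod (p ^ k) // ZDVertex (p ^ k) x},
      p ^ (k - 1) ∣ (x : ZMod (p ^ k)).val → eccent (zdGraph (p ^ k)) x ≤ 1 := by
    intro x hx
    refine iSup_le fun v => ?_
    by_cases hv : x = v
    · simp [hv, SimpleGraph.edist_eq_zero_iff.mpr rfl]
    · have hadj : (zdGraph (p ^ k)).Adj x v := ⟨hv, hkill _ _ hx v.2⟩
      exact le_of_eq (SimpleGraph.edist_eq_one_iff_adj.mpr hadj)
  constructor
  · -- central → multiple of p^(k-1)
    intro hc
    have hdvd : p ^ (k - 1) ∣ (a : ZMod (p ^ k)).val := by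
      by_contra hnd
      -- construct a vertex at distance ≥ 2 from a
      have hbig : ∃ b : {x : ZMod (p ^ k) // ZDVertex (p ^ k) x},
          a ≠ b ∧ (a : ZMod (p ^ k)) * (b : ZMod (p ^ k)) ≠ 0 := by
        by_cases hap : (a : ZMod (p ^ k)) = ((p : ℕ) : ZMod (p ^ k))
        · -- a = p ; use y = p + p^(k-1); here k ≥ 3
          have haval : (a : ZMod (p ^ k)).val = p := by rw [hap, hpval]
          have hk3 : 3 ≤ k := by
            by_contra hlt
            have hk2 : k = 2 := by omega
            apply hnd
            rw [haval, hk2]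
            simp
          have hplt2 : p < p ^ (k - 1) := by
            calc p = p ^ 1 := (pow_one p).symm
            _ < p ^ (k - 1) := Nat.pow_lt_pow_right hp1 (by omega)
          have hsumlt : p + p ^ (k - 1) < p ^ k := by
            have h2 : p + p ^ (k - 1) < 2 * p ^ (k - 1) := by omega
            clear hplt2
            have h3 : 2 * p ^ (k - 1) ≤ p * p ^ (k - 1) :=
              Nat.mul_le_mul_right _ hp1
            have h4 : p * p ^ (k - 1) = p ^ k := by
              rw [← pow_succ']; congr 1; omega
            omega
          set y : ZMod (p ^ k) := ((p + p ^ (k - 1) : ℕ) : ZMod (p ^ k)) with hy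
          have hyval : y.val = p + p ^ (k - 1) := ZMod.val_cast_of_lt hsumlt
          have hyne : y ≠ 0 := by
            rw [Ne, hcast, hyval]
            intro h
            have := Nat.le_of_dvd (by positivity) h
            omega
          have hyvert : ZDVertex (p ^ k) y := by
            refine ⟨hyne, ((p ^ (k - 1) : ℕ) : ZMod (p ^ k)), hpk1ne, ?_⟩
            rw [hy, ← Nat.cast_mul, ZMod.natCast_eq_zero_iff]
            have : (p + p ^ (k - 1)) * p ^ (k - 1) = p ^ k + p ^ (k - 1) * p ^ (k - 1) := by
              have h4 : p * p ^ (k - 1) = p ^ k := by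
                rw [← pow_succ']; congr 1; omega
              ring_nf
              omega
            rw [this]
            refine dvd_add dvd_rfl ?_
            rw [← pow_add]
            exact pow_dvd_pow p (by omega)
          refine ⟨⟨y, hyvert⟩, ?_, ?_⟩
          · intro h
            have hv := congrArg (fun z : {x : ZMod (p ^ k) // ZDVertex (p ^ k) x} => (z : ZMod (p ^ k)).val) h
            simp only [haval] at hv
            rw [hyval] at hv
            have : 0 < p ^ (k - 1) := pow_pos hp.pos _
            omega
          · rw [hmulcast, Ne, ZMod.natCast_eq_zero_iff, haval, hyval]
            intro h
            -- p * (p + p^(k-1)) = p^2 + p^k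
            have heq : p * (p + p ^ (k - 1)) = p ^ 2 + p ^ k := by
              have h4 : p * p ^ (k - 1) = p ^ k := by
                rw [← pow_succ']; congr 1; omega
              ring_nf
              omega
            rw [heq] at h
            have h2 : p ^ k ∣ p ^ 2 := (Nat.dvd_add_right dvd_rfl).mp
              (by rwa [Nat.add_comm] at h)
            have := Nat.le_of_dvd (by positivity) h2
            have : p ^ 2 < p ^ k := Nat.pow_lt_pow_right hp1 (by omega)
            omega
        · -- a ≠ p ; use y = p
          refine ⟨⟨((p : ℕ) : ZMod (p ^ k)), hpvert⟩, ?_, ?_⟩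
          · intro h
            exact hap (congrArg Subtype.val h)
          · rw [hmulcast, Ne, ZMod.natCast_eq_zero_iff]
            intro h
            apply hnd
            obtain ⟨m, hm⟩ := hvp _ a.2
            rw [hm, hpval] at h
            -- p^k ∣ p * m * p = p^2 * m
            have h2 : p ^ 2 * p ^ (k - 2) ∣ p ^ 2 * m := by
              have : p ^ 2 * p ^ (k - 2) = p ^ k := by
                rw [← pow_add]; congr 1; omega
              rw [this]
              have : p * m * p = p ^ 2 * m := by ring
              rwa [this] at h
            have h3 : p ^ (k - 2) ∣ m :=
              (Nat.mul_dvd_mul_iff_left (by positivity : 0 < p ^ 2)).mp h2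
            rw [hm]
            have : p ^ (k - 1) = p * p ^ (k - 2) := by
              rw [← pow_succ']; congr 1; omega
            rw [this]
            exact Nat.mul_dvd_mul_left p h3
      obtain ⟨b, hab, hab0⟩ := hbig
      have h2le : 2 ≤ eccent (zdGraph (p ^ k)) a := by
        refine le_trans ?_ (le_iSup _ b)
        have h0 : (zdGraph (p ^ k)).edist a b ≠ 0 := by
          simpa [SimpleGraph.edist_eq_zero_iff] using hab
        have h1 : (zdGraph (p ^ k)).edist a b ≠ 1 := by
          rw [Ne, SimpleGraph.edist_eq_one_iff_adj]
          rintro ⟨-, h⟩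
          exact hab0 h
        have : 1 < (zdGraph (p ^ k)).edist a b :=
          lt_of_le_of_ne (ENat.one_le_iff_ne_zero.mpr h0) (Ne.symm h1)
        exact Order.add_one_le_of_lt this
      have h1le : eccent (zdGraph (p ^ k)) a ≤ 1 := by
        refine le_trans (hc ⟨((p ^ (k - 1) : ℕ) : ZMod (p ^ k)), hpk1vert⟩) ?_
        exact hecc1 _ (by rw [hpk1val])
      have : (2 : ℕ∞) ≤ 1 := le_trans h2le h1le
      norm_num at this
    -- produce i
    obtain ⟨i, hi⟩ := hdvd
    have hane : (a : ZMod (p ^ k)).val ≠ 0 := by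
      intro h
      exact a.2.1 (by rwa [ZMod.val_eq_zero] at h)
    have hi1 : 1 ≤ i := by
      rcases Nat.eq_zero_or_pos i with h | h
      · rw [h, Nat.mul_zero] at hi; omega
      · exact h
    have hilt : i < p := by
      have hlt : (a : ZMod (p ^ k)).val < p ^ k := ZMod.val_lt _
      rw [hi] at hlt
      have : p ^ k = p ^ (k - 1) * p := by rw [← pow_succ]; congr 1; omega
      rw [this] at hlt
      exact lt_of_mul_lt_mul_left hlt (Nat.zero_le _)
    refine ⟨i, hi1, by omega, ?_⟩
    rw [← ZMod.natCast_zmod_val (a : ZMod (p ^ k)), hi]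
    congr 1
    ring
  · -- multiple of p^(k-1) → central
    rintro ⟨i, hi1, hi2, hia⟩
    have hdvd : p ^ (k - 1) ∣ (a : ZMod (p ^ k)).val := by
      rw [hia]
      have hlt : i * p ^ (k - 1) < p ^ k := by
        have : p ^ k = p * p ^ (k - 1) := by rw [← pow_succ']; congr 1; omega
        rw [this]
        have h0 : 0 < p ^ (k - 1) := pow_pos hp.pos _
        have hip : i < p := by omega
        calc i * p ^ (k - 1) < p * p ^ (k - 1) := by
              exact Nat.mul_lt_mul_of_lt_of_le hip (le_refl _) h0
        _ = p * p ^ (k - 1) := rfl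
      rw [ZMod.val_cast_of_lt hlt]
      exact Dvd.intro_left i rfl
    intro v
    by_cases hv : v = a
    · rw [hv]
    · refine le_trans (hecc1 a hdvd) ?_
      refine le_trans ?_ (le_iSup _ a)
      rw [ENat.one_le_iff_ne_zero]
      simpa [SimpleGraph.edist_eq_zero_iff] using hv
end

section
/- Let n = pq where p and q are distinct primes. Then the zero-divisor graph Γ(Z_n) is a complete bipartite graph whose vertex set is partitioned into the parts {p, 2p, …, (q−1)p} (the nonzero multiples of p) and {q, 2q, …, (p−1)q} (the nonzero multiples of q): every vertex in one part is adjacent to every vertex in the other part, and no two vertices in the same part are adjacent. -/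
lemma zd_mul_eq_zero (n : ℕ) [NeZero n] (x y : ZMod n) :
    x * y = 0 ↔ n ∣ x.val * y.val := by
  rw [← ZMod.val_eq_zero, ZMod.val_mul, Nat.dvd_iff_mod_eq_zero]

theorem stmt8 (p q : ℕ) (hp : p.Prime) (hq : q.Prime) (hpq : p ≠ q) :
    (∀ a : {x : ZMod (p * q) // ZDVertex (p * q) x},
      (p ∣ (a : ZMod (p * q)).val ∧ ¬ q ∣ (a : ZMod (p * q)).val) ∨
        (q ∣ (a : ZMod (p * q)).val ∧ ¬ p ∣ (a : ZMod (p * q)).val)) ∧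
    (∀ a b : {x : ZMod (p * q) // ZDVertex (p * q) x},
      (zdGraph (p * q)).Adj a b ↔
        (p ∣ (a : ZMod (p * q)).val ∧ q ∣ (b : ZMod (p * q)).val) ∨
          (q ∣ (a : ZMod (p * q)).val ∧ p ∣ (b : ZMod (p * q)).val)) := by
  haveI : NeZero (p * q) := ⟨Nat.mul_ne_zero hp.pos.ne' hq.pos.ne'⟩
  have hcop : Nat.Coprime p q := (Nat.coprime_primes hp hq).mpr hpq
  -- if both p and q divide a value, the element is 0
  have hboth : ∀ x : ZMod (p * q), p ∣ x.val → q ∣ x.val → x = 0 := by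
    intro x h1 h2
    have : p * q ∣ x.val := Nat.Coprime.mul_dvd_of_dvd_of_dvd hcop h1 h2
    exact (ZMod.val_eq_zero x).mp (Nat.eq_zero_of_dvd_of_lt this (ZMod.val_lt x))
  -- every vertex is divisible by p or q (exclusively)
  have hpart : ∀ a : {x : ZMod (p * q) // ZDVertex (p * q) x},
      (p ∣ (a : ZMod (p * q)).val ∧ ¬ q ∣ (a : ZMod (p * q)).val) ∨
        (q ∣ (a : ZMod (p * q)).val ∧ ¬ p ∣ (a : ZMod (p * q)).val) := by
    rintro ⟨x, hx0, y, hy0, hxy⟩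
    have hdvd : p * q ∣ x.val * y.val := (zd_mul_eq_zero _ x y).mp hxy
    have hdvdor : p ∣ x.val ∨ q ∣ x.val := by
      by_contra hcon
      push_neg at hcon
      have hp' : p ∣ x.val * y.val := (dvd_mul_right p q).trans hdvd
      have hq' : q ∣ x.val * y.val := (dvd_mul_left q p).trans hdvd
      have hpy : p ∣ y.val := (hp.dvd_mul.mp hp').resolve_left hcon.1
      have hqy : q ∣ y.val := (hq.dvd_mul.mp hq').resolve_left hcon.2
      exact hy0 (hboth y hpy hqy)
    rcases hdvdor with h | h
    · left; exact ⟨h, fun h2 => hx0 (hboth x h h2)⟩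
    · right; exact ⟨h, fun h2 => hx0 (hboth x h2 h)⟩
  refine ⟨hpart, fun a b => ?_⟩
  constructor
  · rintro ⟨hne, hmul⟩
    have hdvd : p * q ∣ (a : ZMod (p*q)).val * (b : ZMod (p*q)).val :=
      (zd_mul_eq_zero _ _ _).mp hmul
    have hp' : p ∣ (a : ZMod (p*q)).val * (b : ZMod (p*q)).val := (dvd_mul_right p q).trans hdvd
    have hq' : q ∣ (a : ZMod (p*q)).val * (b : ZMod (p*q)).val := (dvd_mul_left q p).trans hdvd
    rcases hpart a with ⟨hpa, hqa⟩ | ⟨hqa, hpa⟩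
    · left
      exact ⟨hpa, (hq.dvd_mul.mp hq').resolve_left hqa⟩
    · right
      exact ⟨hqa, (hp.dvd_mul.mp hp').resolve_left hpa⟩
  · rintro (⟨h1, h2⟩ | ⟨h1, h2⟩)
    · refine ⟨?_, (zd_mul_eq_zero _ _ _).mpr
        (Nat.Coprime.mul_dvd_of_dvd_of_dvd hcop (h1.mul_right _) (h2.mul_left _))⟩
      intro hab
      rcases hpart b with ⟨_, hqb⟩ | ⟨_, hpb⟩
      · exact hqb h2
      · exact hpb (hab ▸ h1)
    · refine ⟨?_, (zd_mul_eq_zero _ _ _).mpr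
        (Nat.Coprime.mul_dvd_of_dvd_of_dvd hcop (h2.mul_left _) (h1.mul_right _))⟩
      intro hab
      rcases hpart b with ⟨_, hqb⟩ | ⟨_, hpb⟩
      · exact hqb (hab ▸ h1)
      · exact hpb h2
end

section
/- Let p and q be two distinct primes dividing a positive integer n with n > pq. Then the distance between the vertices p and q in the zero-divisor graph Γ(Z_n) equals 3. -/
theorem stmt10 (n p q : ℕ) (hn : 0 < n) (hp : p.Prime) (hq : q.Prime)
    (hpq : p ≠ q) (hpn : p ∣ n) (hqn : q ∣ n) (hbig : p * q < n)
    (hvp : ZDVertex n ((p : ZMod n))) (hvq : ZDVertex n ((q : ZMod n))) :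
    (zdGraph n).dist ⟨(p : ZMod n), hvp⟩ ⟨(q : ZMod n), hvq⟩ = 3 := by
  haveI : NeZero n := ⟨hn.ne'⟩
  have cast0 : ∀ a : ℕ, ((a : ZMod n) = 0 ↔ n ∣ a) := fun a =>
    ZMod.natCast_eq_zero_iff a n
  have cast_ne : ∀ a b : ℕ, a < n → b < n → a ≠ b → (a : ZMod n) ≠ (b : ZMod n) := by
    intro a b ha hb hab h
    apply hab
    have h2 := congrArg ZMod.val h
    rwa [ZMod.val_natCast_of_lt ha, ZMod.val_natCast_of_lt hb] at h2
  have cast_ne0 : ∀ a : ℕ, 0 < a → a < n → (a : ZMod n) ≠ 0 := by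
    intro a h0 h1 h
    have := Nat.le_of_dvd h0 ((cast0 a).mp h)
    omega
  have hpltn : p < n := by
    have h1 : p ≤ n := Nat.le_of_dvd hn hpn
    rcases h1.lt_or_eq with h | h
    · exact h
    · exact absurd (by rw [h]; exact ZMod.natCast_self n) hvp.1
  have hqltn : q < n := by
    have h1 : q ≤ n := Nat.le_of_dvd hn hqn
    rcases h1.lt_or_eq with h | h
    · exact h
    · exact absurd (by rw [h]; exact ZMod.natCast_self n) hvq.1
  have cop : Nat.Coprime p q := (Nat.coprime_primes hp hq).mpr hpq
  have hpqn : p * q ∣ n := Nat.Coprime.mul_dvd_of_dvd_of_dvd cop hpn hqn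
  set a := n / p with ha_def
  set b := n / q with hb_def
  set m := n / (p * q) with hm_def
  have hpa : p * a = n := Nat.mul_div_cancel' hpn
  have hqb : q * b = n := Nat.mul_div_cancel' hqn
  have hmm : p * q * m = n := Nat.mul_div_cancel' hpqn
  have ha_eq : a = q * m := Nat.eq_of_mul_eq_mul_left hp.pos (by rw [hpa, ← mul_assoc, hmm])
  have hb_eq : b = p * m := Nat.eq_of_mul_eq_mul_left hq.pos
    (by rw [hqb, show q * (p * m) = p * q * m by ring, hmm])
  have ha0 : 0 < a := by
    rcases Nat.eq_zero_or_pos a with h | h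
    · rw [h, mul_zero] at hpa; omega
    · exact h
  have hb0 : 0 < b := by
    rcases Nat.eq_zero_or_pos b with h | h
    · rw [h, mul_zero] at hqb; omega
    · exact h
  have haltn : a < n := Nat.div_lt_self hn hp.one_lt
  have hbltn : b < n := Nat.div_lt_self hn hq.one_lt
  -- vertex proofs
  have hva : ZDVertex n ((a : ZMod n)) := by
    refine ⟨cast_ne0 a ha0 haltn, (p : ZMod n), hvp.1, ?_⟩
    rw [← Nat.cast_mul, mul_comm a p, hpa, ZMod.natCast_self]
  have hvb : ZDVertex n ((b : ZMod n)) := by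
    refine ⟨cast_ne0 b hb0 hbltn, (q : ZMod n), hvq.1, ?_⟩
    rw [← Nat.cast_mul, mul_comm b q, hqb, ZMod.natCast_self]
  -- distinctness
  have hpa_ne : p ≠ a := by
    intro h
    have : n = p * p := by rw [← hpa, ← h]
    have : q ∣ p * p := this ▸ hqn
    have : q ∣ p := (Nat.Prime.dvd_mul hq).mp this |>.elim id id
    exact hpq ((Nat.prime_dvd_prime_iff_eq hq hp).mp this).symm
  have hqb_ne : q ≠ b := by
    intro h
    have : n = q * q := by rw [← hqb, ← h]
    have : p ∣ q * q := this ▸ hpn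
    have : p ∣ q := (Nat.Prime.dvd_mul hp).mp this |>.elim id id
    exact hpq ((Nat.prime_dvd_prime_iff_eq hp hq).mp this)
  have hab_ne : a ≠ b := by
    intro h
    have h2 : p * b = q * b := by rw [← h, hpa, ← hqb, h]
    exact hpq (Nat.eq_of_mul_eq_mul_right hb0 h2)
  -- adjacencies
  have adj1 : (zdGraph n).Adj ⟨(p : ZMod n), hvp⟩ ⟨(a : ZMod n), hva⟩ := by
    refine ⟨?_, ?_⟩
    · intro h
      exact cast_ne p a hpltn haltn hpa_ne (congrArg Subtype.val h)
    · show (p : ZMod n) * (a : ZMod n) = 0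
      rw [← Nat.cast_mul, hpa, ZMod.natCast_self]
  have adj2 : (zdGraph n).Adj ⟨(a : ZMod n), hva⟩ ⟨(b : ZMod n), hvb⟩ := by
    refine ⟨?_, ?_⟩
    · intro h
      exact cast_ne a b haltn hbltn hab_ne (congrArg Subtype.val h)
    · show (a : ZMod n) * (b : ZMod n) = 0
      rw [← Nat.cast_mul, show a * b = n * m by rw [ha_eq, hb_eq, ← hmm]; ring,
        Nat.cast_mul, ZMod.natCast_self, zero_mul]
  have adj3 : (zdGraph n).Adj ⟨(b : ZMod n), hvb⟩ ⟨(q : ZMod n), hvq⟩ := by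
    refine ⟨?_, ?_⟩
    · intro h
      exact cast_ne b q hbltn hqltn (Ne.symm hqb_ne) (congrArg Subtype.val h)
    · show (b : ZMod n) * (q : ZMod n) = 0
      rw [← Nat.cast_mul, mul_comm b q, hqb, ZMod.natCast_self]
  set U : {x : ZMod n // ZDVertex n x} := ⟨(p : ZMod n), hvp⟩ with hU
  set V : {x : ZMod n // ZDVertex n x} := ⟨(q : ZMod n), hvq⟩ with hV
  let w : (zdGraph n).Walk U V :=
    SimpleGraph.Walk.cons adj1 (SimpleGraph.Walk.cons adj2 (SimpleGraph.Walk.cons adj3 SimpleGraph.Walk.nil))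
  have hwlen : w.length = 3 := rfl
  have hle : (zdGraph n).dist U V ≤ 3 := hwlen ▸ SimpleGraph.dist_le w
  -- lower bound pieces
  have hUV : U ≠ V := by
    intro h
    exact cast_ne p q hpltn hqltn hpq (congrArg Subtype.val h)
  have hnadj : ¬ (zdGraph n).Adj U V := by
    rintro ⟨-, h⟩
    rw [← Nat.cast_mul] at h
    have := Nat.le_of_dvd (Nat.mul_pos hp.pos hq.pos) ((cast0 _).mp h)
    omega
  have key : ∀ x : {x : ZMod n // ZDVertex n x},
      ¬ ((zdGraph n).Adj U x ∧ (zdGraph n).Adj x V) := by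
    rintro x ⟨⟨-, h1⟩, ⟨-, h2⟩⟩
    have hx : (x : ZMod n) ≠ 0 := x.2.1
    have hv : (((x : ZMod n).val : ℕ) : ZMod n) = (x : ZMod n) :=
      ZMod.natCast_rightInverse (x : ZMod n)
    have h1' : (p : ZMod n) * (x : ZMod n) = 0 := h1
    have h2' : (x : ZMod n) * (q : ZMod n) = 0 := h2
    have d1 : n ∣ p * (x : ZMod n).val := by
      rw [← cast0, Nat.cast_mul, hv]
      exact h1'
    have d2 : n ∣ q * (x : ZMod n).val := by
      rw [← cast0, Nat.cast_mul, hv, mul_comm]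
      exact h2'
    have d3 : n ∣ (x : ZMod n).val := by
      have hg := Nat.dvd_gcd d1 d2
      rwa [Nat.gcd_mul_right, Nat.Coprime.gcd_eq_one cop, one_mul] at hg
    have hz : (x : ZMod n).val = 0 := Nat.eq_zero_of_dvd_of_lt d3 (ZMod.val_lt _)
    apply hx
    rw [← hv, hz, Nat.cast_zero]
  -- lower bound
  have hreach : (zdGraph n).Reachable U V := ⟨w⟩
  obtain ⟨w', hw'⟩ := hreach.exists_walk_length_eq_dist
  have hge : 3 ≤ (zdGraph n).dist U V := by
    by_contra hcon
    push_neg at hcon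
    have h3 : w'.length = 0 ∨ w'.length = 1 ∨ w'.length = 2 := by omega
    rcases h3 with h0 | h1 | h2
    · exact hUV (SimpleGraph.Walk.eq_of_length_eq_zero h0)
    · exact hnadj (SimpleGraph.Walk.adj_of_length_eq_one h1)
    · have a1 : (zdGraph n).Adj (w'.getVert 0) (w'.getVert 1) :=
        w'.adj_getVert_succ (by omega)
      have a2 : (zdGraph n).Adj (w'.getVert 1) (w'.getVert 2) :=
        w'.adj_getVert_succ (by omega)
      rw [SimpleGraph.Walk.getVert_zero] at a1
      have hvert : w'.getVert 2 = V := by rw [← h2]; exact w'.getVert_length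
      rw [hvert] at a2
      exact key (w'.getVert 1) ⟨a1, a2⟩
  omega
end

section
/- Let p and q be two distinct primes dividing a positive integer n with n > pq. Then the diameter of the zero-divisor graph Γ(Z_n) equals 3. -/
section helpers

variable {n : ℕ}

/-- a common annihilator gives distance ≤ 2 -/
lemma edist_le_two_of_common (a b : {x : ZMod n // ZDVertex n x})
    (hab : (a : ZMod n) * (b : ZMod n) ≠ 0) (c : ZMod n) (hc : c ≠ 0)
    (hac : (a : ZMod n) * c = 0) (hbc : (b : ZMod n) * c = 0) :
    (zdGraph n).edist a b ≤ 2 := by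
  have hcv : ZDVertex n c := ⟨hc, (a : ZMod n), a.2.1, by rw [mul_comm]; exact hac⟩
  set C : {x : ZMod n // ZDVertex n x} := ⟨c, hcv⟩ with hC
  have haC : (zdGraph n).Adj a C := by
    refine ⟨?_, hac⟩
    intro h
    have : (a : ZMod n) = c := congrArg Subtype.val h
    apply hab
    rw [mul_comm]
    rw [← this] at hbc
    exact hbc
  have hCb : (zdGraph n).Adj C b := by
    refine ⟨?_, by rw [mul_comm]; exact hbc⟩
    intro h
    have : c = (b : ZMod n) := congrArg Subtype.val h
    apply hab
    rw [this] at hac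
    exact hac
  simpa using SimpleGraph.edist_le (SimpleGraph.Walk.cons haC (SimpleGraph.Walk.cons hCb SimpleGraph.Walk.nil))

lemma edist_le_three (u v : {x : ZMod n // ZDVertex n x}) :
    (zdGraph n).edist u v ≤ 3 := by
  by_cases huv : u = v
  · subst huv; simp
  by_cases h0 : (u : ZMod n) * (v : ZMod n) = 0
  · have : (zdGraph n).Adj u v := ⟨huv, h0⟩
    calc (zdGraph n).edist u v = 1 := SimpleGraph.edist_eq_one_iff_adj.mpr this
      _ ≤ 3 := by norm_num
  obtain ⟨x, hx, hux⟩ := u.2.2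
  obtain ⟨y, hy, hvy⟩ := v.2.2
  by_cases h1 : (u : ZMod n) * y = 0
  · exact le_trans (edist_le_two_of_common u v h0 y hy h1 hvy) (by norm_num)
  by_cases h2 : (v : ZMod n) * x = 0
  · exact le_trans (edist_le_two_of_common u v h0 x hx hux h2) (by norm_num)
  by_cases h3 : x * y = 0
  · -- path u - x - y - v
    have hxv : ZDVertex n x := ⟨hx, (u : ZMod n), u.2.1, by rw [mul_comm]; exact hux⟩
    have hyv : ZDVertex n y := ⟨hy, (v : ZMod n), v.2.1, by rw [mul_comm]; exact hvy⟩
    set X : {x : ZMod n // ZDVertex n x} := ⟨x, hxv⟩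
    set Y : {x : ZMod n // ZDVertex n x} := ⟨y, hyv⟩
    have a1 : (zdGraph n).Adj u X := by
      refine ⟨fun h => ?_, hux⟩
      have : (u : ZMod n) = x := congrArg Subtype.val h
      exact h1 (by rw [this]; exact h3)
    have a2 : (zdGraph n).Adj X Y := by
      refine ⟨fun h => ?_, h3⟩
      have : x = y := congrArg Subtype.val h
      exact h1 (by rw [← this]; exact hux)
    have a3 : (zdGraph n).Adj Y v := by
      refine ⟨fun h => ?_, by rw [mul_comm]; exact hvy⟩
      have : y = (v : ZMod n) := congrArg Subtype.val h
      exact h2 (by rw [← this, mul_comm]; exact h3)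
    simpa using SimpleGraph.edist_le
      (SimpleGraph.Walk.cons a1 (SimpleGraph.Walk.cons a2 (SimpleGraph.Walk.cons a3 SimpleGraph.Walk.nil)))
  · -- x*y ≠ 0 is a common annihilator
    refine le_trans (edist_le_two_of_common u v h0 (x * y) h3 ?_ ?_) (by norm_num)
    · rw [← mul_assoc, hux, zero_mul]
    · rw [mul_comm x y, ← mul_assoc, hvy, zero_mul]

end helpers

theorem stmt11 (n p q : ℕ) (hn : 0 < n) (hp : p.Prime) (hq : q.Prime)
    (hpq : p ≠ q) (hpn : p ∣ n) (hqn : q ∣ n) (hbig : p * q < n) :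
    (zdGraph n).diam = 3 := by
  haveI : NeZero n := ⟨hn.ne'⟩
  have hcop : Nat.Coprime p q := (Nat.coprime_primes hp hq).mpr hpq
  have hpltn : p < n := lt_of_le_of_lt (Nat.le_mul_of_pos_right p hq.pos) hbig
  have hqltn : q < n := lt_of_le_of_lt (Nat.le_mul_of_pos_left q hp.pos) hbig
  have castne : ∀ m : ℕ, 0 < m → m < n → (m : ZMod n) ≠ 0 := by
    intro m h1 h2 h
    have hd := (ZMod.natCast_eq_zero_iff m n).mp h
    exact absurd (Nat.le_of_dvd h1 hd) (not_le.mpr h2)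
  -- P and Q are vertices
  have hPv : ZDVertex n (p : ZMod n) := by
    refine ⟨castne p hp.pos hpltn, ((n / p : ℕ) : ZMod n),
      castne _ (Nat.div_pos (Nat.le_of_dvd hn hpn) hp.pos) (Nat.div_lt_self hn hp.one_lt), ?_⟩
    rw [← Nat.cast_mul, Nat.mul_div_cancel' hpn, ZMod.natCast_self]
  have hQv : ZDVertex n (q : ZMod n) := by
    refine ⟨castne q hq.pos hqltn, ((n / q : ℕ) : ZMod n),
      castne _ (Nat.div_pos (Nat.le_of_dvd hn hqn) hq.pos) (Nat.div_lt_self hn hq.one_lt), ?_⟩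
    rw [← Nat.cast_mul, Nat.mul_div_cancel' hqn, ZMod.natCast_self]
  set P : {x : ZMod n // ZDVertex n x} := ⟨(p : ZMod n), hPv⟩ with hPdef
  set Q : {x : ZMod n // ZDVertex n x} := ⟨(q : ZMod n), hQv⟩ with hQdef
  -- p and q are distinct mod n
  have hPQval : (p : ZMod n) ≠ (q : ZMod n) := by
    intro h
    apply hpq
    have := congrArg ZMod.val h
    rwa [ZMod.val_natCast_of_lt hpltn, ZMod.val_natCast_of_lt hqltn] at this
  have hPQ : P ≠ Q := fun h => hPQval (congrArg Subtype.val h)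
  -- p and q are not adjacent
  have hnadj : (p : ZMod n) * (q : ZMod n) ≠ 0 := by
    rw [← Nat.cast_mul]
    exact castne _ (Nat.mul_pos hp.pos hq.pos) hbig
  -- no common neighbor
  have hno : ∀ c : ZMod n, (p : ZMod n) * c = 0 → (q : ZMod n) * c = 0 → c = 0 := by
    intro c h1 h2
    have hc : ((c.val : ℕ) : ZMod n) = c := by rw [ZMod.natCast_val, ZMod.cast_id]
    rw [← hc, ← Nat.cast_mul] at h1 h2
    have d1 : n ∣ p * c.val := (ZMod.natCast_eq_zero_iff _ n).mp h1
    have d2 : n ∣ q * c.val := (ZMod.natCast_eq_zero_iff _ n).mp h2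
    have hd : n ∣ c.val := by
      have := Nat.dvd_gcd d1 d2
      rwa [Nat.gcd_mul_right, hcop.gcd_eq_one, one_mul] at this
    exact (ZMod.val_eq_zero c).mp (Nat.eq_zero_of_dvd_of_lt hd (ZMod.val_lt c))
  -- every walk from P to Q has length ≥ 3
  have hwalk : ∀ w : (zdGraph n).Walk P Q, 3 ≤ w.length := by
    intro w
    by_contra hlt
    push_neg at hlt
    interval_cases h : w.length
    · exact hPQ (SimpleGraph.Walk.eq_of_length_eq_zero h)
    · have ha := w.adj_getVert_succ (i := 0) (by omega)
      rw [SimpleGraph.Walk.getVert_zero] at ha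
      have : w.getVert 1 = Q := by rw [← h]; exact w.getVert_length
      rw [this] at ha
      exact hnadj ha.2
    · have ha1 := w.adj_getVert_succ (i := 0) (by omega)
      have ha2 := w.adj_getVert_succ (i := 1) (by omega)
      rw [SimpleGraph.Walk.getVert_zero] at ha1
      have h2 : w.getVert 2 = Q := by rw [← h]; exact w.getVert_length
      rw [h2] at ha2
      set c := w.getVert 1
      have hc0 := c.2.1
      exact hc0 (hno c ha1.2 (by rw [mul_comm]; exact ha2.2))
  -- edist P Q = 3
  have hPQ3 : (zdGraph n).edist P Q = 3 := by
    refine le_antisymm (edist_le_three P Q) ?_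
    rw [SimpleGraph.edist_eq_sInf]
    refine le_sInf ?_
    rintro x ⟨w, rfl⟩
    show (3 : ℕ∞) ≤ (w.length : ℕ∞)
    exact_mod_cast hwalk w
  have hediam : (zdGraph n).ediam = 3 :=
    le_antisymm (SimpleGraph.ediam_le_of_edist_le fun u v => edist_le_three u v)
      (hPQ3 ▸ SimpleGraph.edist_le_ediam)
  rw [SimpleGraph.diam, hediam]
  rfl
end

section
/- Let n be a positive integer divisible by at least two distinct primes p and q, with n > pq, and let a be a vertex of the zero-divisor graph Γ(Z_n) such that r·a = 0 in Z_n for some prime r dividing n. Then for every other vertex b of Γ(Z_n), the distance d(a,b) in Γ(Z_n) is at most 2; hence the eccentricity of a is at most 2. -/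
theorem stmt13 (n p q : ℕ) (hn : 0 < n) (hp : p.Prime) (hq : q.Prime)
    (hpq : p ≠ q) (hpn : p ∣ n) (hqn : q ∣ n) (hbig : p * q < n)
    (a : {x : ZMod n // ZDVertex n x})
    (r : ℕ) (hr : r.Prime) (hrn : r ∣ n)
    (hra : (r : ZMod n) * (a : ZMod n) = 0) :
    (∀ b : {x : ZMod n // ZDVertex n x}, b ≠ a → (zdGraph n).edist a b ≤ 2) ∧
      eccent (zdGraph n) a ≤ 2 := by
  haveI : NeZero n := ⟨hn.ne'⟩
  have le1 : ∀ x y : {x : ZMod n // ZDVertex n x},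
      (x : ZMod n) * (y : ZMod n) = 0 → (zdGraph n).edist x y ≤ 1 := by
    intro x y h
    rcases eq_or_ne x y with rfl | hne
    · simp [SimpleGraph.edist_self]
    · exact le_of_eq (SimpleGraph.edist_eq_one_iff_adj.mpr ⟨hne, h⟩)
  obtain ⟨m, hm⟩ := hrn
  have hm_dvd : m ∣ (a : ZMod n).val := by
    have hdvd : n ∣ r * (a : ZMod n).val := by
      rw [← ZMod.natCast_eq_zero_iff]
      push_cast
      rw [ZMod.natCast_zmod_val]
      exact hra
    have hdvd' : r * m ∣ r * (a : ZMod n).val := (dvd_of_eq hm.symm).trans hdvd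
    exact (mul_dvd_mul_iff_left hr.pos.ne').mp hdvd'
  -- a annihilates anything whose val is divisible by r
  have hann : ∀ c : ZMod n, r ∣ c.val → (a : ZMod n) * c = 0 := by
    intro c hc
    have h1 : (a : ZMod n) * c = (((a : ZMod n).val * c.val : ℕ) : ZMod n) := by
      push_cast
      rw [ZMod.natCast_zmod_val, ZMod.natCast_zmod_val]
    rw [h1, ZMod.natCast_eq_zero_iff]
    refine (dvd_of_eq hm).trans ?_
    have := mul_dvd_mul hm_dvd hc
    rwa [mul_comm m r] at this
  -- main distance claim
  have main : ∀ b : {x : ZMod n // ZDVertex n x}, b ≠ a → (zdGraph n).edist a b ≤ 2 := by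
    intro b hba
    set bv := (b : ZMod n).val with hbv
    -- b has a common prime factor with n
    have hnc : ¬ Nat.Coprime bv n := by
      intro hco
      have hu : IsUnit ((bv : ℕ) : ZMod n) := (ZMod.isUnit_iff_coprime bv n).mpr hco
      rw [ZMod.natCast_zmod_val] at hu
      obtain ⟨y, hy, hby⟩ := b.prop.2
      exact hy ((hu.mul_right_eq_zero).mp hby)
    by_cases hrb : r ∣ bv
    · -- a adjacent to b directly
      have := le1 a b (hann _ hrb)
      exact this.trans (by norm_num)
    · -- pick a prime s | gcd(bv, n), s ≠ r, use c = n/s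
      set g := Nat.gcd bv n with hg
      have hg1 : g ≠ 1 := fun h => hnc h
      have hs : g.minFac.Prime := Nat.minFac_prime hg1
      set s := g.minFac with hsdef
      have hsb : s ∣ bv := (Nat.minFac_dvd g).trans (Nat.gcd_dvd_left _ _)
      have hsn : s ∣ n := (Nat.minFac_dvd g).trans (Nat.gcd_dvd_right _ _)
      have hsr : s ≠ r := fun h => hrb (h ▸ hsb)
      obtain ⟨m', hm'⟩ := hsn
      have hrm' : r ∣ m' := by
        have : r ∣ s * m' := hm' ▸ ⟨m, hm⟩
        exact (hr.dvd_mul.mp this).resolve_left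
          (fun h => hsr ((Nat.prime_dvd_prime_iff_eq hr hs).mp h).symm)
      have hm'pos : 0 < m' := by
        rcases Nat.eq_zero_or_pos m' with h | h
        · simp [h] at hm'; omega
        · exact h
      have hm'lt : m' < n := by
        have : 2 ≤ s := hs.two_le
        calc m' < 2 * m' := by omega
        _ ≤ s * m' := Nat.mul_le_mul_right _ this
        _ = n := hm'.symm
      have hslt : s < n := by
        have : 2 ≤ m' := hr.two_le.trans (Nat.le_of_dvd hm'pos hrm')
        have h2 : 1 ≤ s := hs.one_lt.le |>.trans' (by omega)
        calc s < s * 2 := by have := hs.two_le; omega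
        _ ≤ s * m' := Nat.mul_le_mul_left _ this
        _ = n := hm'.symm
      -- c is a vertex
      have hc0 : ((m' : ℕ) : ZMod n) ≠ 0 := by
        intro h
        have h' := (ZMod.natCast_eq_zero_iff m' n).mp h
        exact absurd (Nat.le_of_dvd hm'pos h') (not_le.mpr hm'lt)
      have hs0 : ((s : ℕ) : ZMod n) ≠ 0 := by
        intro h
        have h' := (ZMod.natCast_eq_zero_iff s n).mp h
        exact absurd (Nat.le_of_dvd hs.pos h') (not_le.mpr hslt)
      have hms : ((m' : ℕ) : ZMod n) * (s : ZMod n) = 0 := by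
        rw [← Nat.cast_mul, ZMod.natCast_eq_zero_iff, mul_comm]
        exact hm' ▸ dvd_refl n
      have hcvert : ZDVertex n ((m' : ℕ) : ZMod n) := ⟨hc0, ⟨(s : ZMod n), hs0, hms⟩⟩
      set c : {x : ZMod n // ZDVertex n x} := ⟨((m' : ℕ) : ZMod n), hcvert⟩ with hcdef
      have hac : (a : ZMod n) * (c : ZMod n) = 0 := by
        apply hann
        have : ((m' : ℕ) : ZMod n).val = m' := ZMod.val_natCast_of_lt hm'lt
        rw [hcdef]
        simp only [this]
        exact hrm'
      have hcb : (c : ZMod n) * (b : ZMod n) = 0 := by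
        have h1 : (c : ZMod n) * (b : ZMod n) = ((m' * bv : ℕ) : ZMod n) := by
          rw [hcdef]; push_cast; rw [ZMod.natCast_zmod_val]
        rw [h1, ZMod.natCast_eq_zero_iff]
        refine (dvd_of_eq hm').trans ?_
        obtain ⟨k, hk⟩ := hsb
        exact ⟨k, by rw [hk]; ring⟩
      calc (zdGraph n).edist a b ≤ (zdGraph n).edist a c + (zdGraph n).edist c b :=
            SimpleGraph.edist_triangle
        _ ≤ 1 + 1 := add_le_add (le1 a c hac) (le1 c b hcb)
        _ = 2 := by norm_num
  refine ⟨main, ?_⟩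
  apply iSup_le
  intro v
  rcases eq_or_ne v a with rfl | hv
  · simp [SimpleGraph.edist_self]
  · exact main v hv
end
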